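/- On the set of labeled rooted trees on vertex set {0,1,...,n} with root 0, the statistic deg(0) (number of children of the root) is equidistributed with the statistic deg(p), the number of children of the parent of vertex 1: for every k, #{T : deg(0)=k} = #{T : deg(p)=k}. -/

import Mathlib

namespace DegPf

variable {n : ℕ}

def F (f : Fin n → Fin (n + 1)) : Fin (n + 1) → Fin (n + 1) :=
  fun w : Fin (n + 1) =>
    if h : (w : ℕ) = 0 then w
    else f ⟨(w : ℕ) - 1, by have := w.isLt; omega⟩

def IsTree (f : Fin n → Fin (n + 1)) : Prop :=
  ∀ v, ∃ K, (F f)^[K] v = 0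

lemma F_zero (f : Fin n → Fin (n + 1)) : F f 0 = 0 := by simp [F]

lemma F_apply_ne (f : Fin n → Fin (n + 1)) (v : Fin (n + 1)) (hv : (v : ℕ) ≠ 0) :
    F f v = f ⟨(v : ℕ) - 1, by have := v.isLt; omega⟩ := by
  simp [F, hv]

lemma F_vtx (f : Fin n → Fin (n + 1)) (i : Fin n) :
    F f ⟨(i : ℕ) + 1, by omega⟩ = f i := by
  rw [F_apply_ne f _ (by simp)]
  congr 1

def i0 (hn : 0 < n) : Fin n := ⟨0, hn⟩

def vone (hn : 0 < n) : Fin (n + 1) := ⟨1, by omega⟩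

lemma F_vone (hn : 0 < n) (f : Fin n → Fin (n + 1)) :
    F f (vone hn) = f (i0 hn) := F_vtx f (i0 hn)

noncomputable def Kf (hn : 0 < n) (f : Fin n → Fin (n + 1)) (ht : IsTree f) : ℕ :=
  Nat.find (ht (vone hn))

lemma Kf_spec (hn : 0 < n) (f : Fin n → Fin (n + 1)) (ht : IsTree f) :
    (F f)^[Kf hn f ht] (vone hn) = 0 := Nat.find_spec (ht (vone hn))

lemma Kf_min (hn : 0 < n) (f : Fin n → Fin (n + 1)) (ht : IsTree f) {m : ℕ}
    (hm : m < Kf hn f ht) : (F f)^[m] (vone hn) ≠ 0 := Nat.find_min (ht (vone hn)) hm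

lemma chain_inj (hn : 0 < n) (f : Fin n → Fin (n + 1)) (ht : IsTree f) {a b : ℕ}
    (hab : a < b) (hb : b ≤ Kf hn f ht) :
    (F f)^[a] (vone hn) ≠ (F f)^[b] (vone hn) := by
  intro hEq
  have h1 : (F f)^[Kf hn f ht - b + a] (vone hn) = 0 := by
    rw [Function.iterate_add_apply, hEq, ← Function.iterate_add_apply,
      Nat.sub_add_cancel hb]
    exact Kf_spec hn f ht
  exact Kf_min hn f ht (by omega) h1

lemma two_le_Kf (hn : 0 < n) (f : Fin n → Fin (n + 1)) (ht : IsTree f)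
    (hp : f (i0 hn) ≠ 0) : 2 ≤ Kf hn f ht := by
  have h0 : (F f)^[0] (vone hn) ≠ 0 := by
    simp only [Function.iterate_zero_apply]
    intro h
    have := congrArg Fin.val h
    simp [vone] at this
  have h1 : (F f)^[1] (vone hn) ≠ 0 := by
    simpa [Function.iterate_one, F_vone hn f] using hp
  have hK := Kf_spec hn f ht
  by_contra hlt
  push_neg at hlt
  interval_cases h : Kf hn f ht
  · exact h0 hK
  · exact h1 hK

noncomputable def cf (hn : 0 < n) (f : Fin n → Fin (n + 1)) (ht : IsTree f) :
    Fin (n + 1) :=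
  (F f)^[Kf hn f ht - 1] (vone hn)

lemma cf_ne_zero (hn : 0 < n) (f : Fin n → Fin (n + 1)) (ht : IsTree f)
    (hp : f (i0 hn) ≠ 0) : cf hn f ht ≠ 0 := by
  have := two_le_Kf hn f ht hp
  exact Kf_min hn f ht (by omega)

lemma cf_val_ne_zero (hn : 0 < n) (f : Fin n → Fin (n + 1)) (ht : IsTree f)
    (hp : f (i0 hn) ≠ 0) : (cf hn f ht : ℕ) ≠ 0 := by
  intro h
  exact cf_ne_zero hn f ht hp (Fin.ext (by simpa using h))

lemma F_cf (hn : 0 < n) (f : Fin n → Fin (n + 1)) (ht : IsTree f)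
    (hp : f (i0 hn) ≠ 0) : F f (cf hn f ht) = 0 := by
  have h2 := two_le_Kf hn f ht hp
  have : (F f)^[(Kf hn f ht - 1) + 1] (vone hn) = 0 := by
    rw [Nat.sub_add_cancel (by omega)]
    exact Kf_spec hn f ht
  rwa [Function.iterate_succ_apply'] at this

lemma cf_ne_vone (hn : 0 < n) (f : Fin n → Fin (n + 1)) (ht : IsTree f)
    (hp : f (i0 hn) ≠ 0) : cf hn f ht ≠ vone hn := by
  have h2 := two_le_Kf hn f ht hp
  intro h
  exact chain_inj hn f ht (a := 0) (b := Kf hn f ht - 1) (by omega) (by omega)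
    (by simp only [Function.iterate_zero_apply]; exact h.symm)

lemma cf_val_lt (hn : 0 < n) (f : Fin n → Fin (n + 1)) (ht : IsTree f) :
    (cf hn f ht : ℕ) < n + 1 := (cf hn f ht).isLt

noncomputable def ic (hn : 0 < n) (f : Fin n → Fin (n + 1)) (ht : IsTree f)
    (hp : f (i0 hn) ≠ 0) : Fin n :=
  ⟨(cf hn f ht : ℕ) - 1, by
    have := cf_val_ne_zero hn f ht hp
    have := cf_val_lt hn f ht
    omega⟩

lemma f_ic (hn : 0 < n) (f : Fin n → Fin (n + 1)) (ht : IsTree f)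
    (hp : f (i0 hn) ≠ 0) : f (ic hn f ht hp) = 0 := by
  have := F_cf hn f ht hp
  rwa [F_apply_ne f _ (cf_val_ne_zero hn f ht hp)] at this

lemma cf_val_ne_one (hn : 0 < n) (f : Fin n → Fin (n + 1)) (ht : IsTree f)
    (hp : f (i0 hn) ≠ 0) : (cf hn f ht : ℕ) ≠ 1 := by
  intro h
  exact cf_ne_vone hn f ht hp (Fin.ext (by simpa [vone] using h))

lemma ic_ne_i0 (hn : 0 < n) (f : Fin n → Fin (n + 1)) (ht : IsTree f)
    (hp : f (i0 hn) ≠ 0) : ic hn f ht hp ≠ i0 hn := by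
  intro h
  have hv := congrArg Fin.val h
  have h0 := cf_val_ne_zero hn f ht hp
  have h1 := cf_val_ne_one hn f ht hp
  simp only [ic, i0] at hv
  omega

open Classical in
noncomputable def Phi (hn : 0 < n) (f : Fin n → Fin (n + 1)) : Fin n → Fin (n + 1) :=
  if h : IsTree f ∧ f (i0 hn) ≠ 0 then
    fun i =>
      if i = i0 hn then f (i0 hn)
      else if (i : ℕ) + 1 = (cf hn f h.1 : ℕ) then 0
      else Equiv.swap 0 (f (i0 hn)) (f i)
  else f

lemma Phi_eq_self (hn : 0 < n) (f : Fin n → Fin (n + 1)) (hp : f (i0 hn) = 0) :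
    Phi hn f = f := by
  rw [Phi]
  rw [dif_neg]
  tauto

lemma Phi_def (hn : 0 < n) (f : Fin n → Fin (n + 1)) (ht : IsTree f)
    (hp : f (i0 hn) ≠ 0) :
    Phi hn f = fun i =>
      if i = i0 hn then f (i0 hn)
      else if (i : ℕ) + 1 = (cf hn f ht : ℕ) then 0
      else Equiv.swap 0 (f (i0 hn)) (f i) := by
  rw [Phi, dif_pos ⟨ht, hp⟩]

lemma g_i0 (hn : 0 < n) (f : Fin n → Fin (n + 1)) (ht : IsTree f)
    (hp : f (i0 hn) ≠ 0) : Phi hn f (i0 hn) = f (i0 hn) := by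
  rw [Phi_def hn f ht hp]
  simp

lemma g_ic (hn : 0 < n) (f : Fin n → Fin (n + 1)) (ht : IsTree f)
    (hp : f (i0 hn) ≠ 0) : Phi hn f (ic hn f ht hp) = 0 := by
  rw [Phi_def hn f ht hp]
  simp only [if_neg (ic_ne_i0 hn f ht hp)]
  rw [if_pos]
  have h0 := cf_val_ne_zero hn f ht hp
  simp only [ic]
  omega

lemma g_other (hn : 0 < n) (f : Fin n → Fin (n + 1)) (ht : IsTree f)
    (hp : f (i0 hn) ≠ 0) (i : Fin n) (h1 : i ≠ i0 hn)
    (h2 : (i : ℕ) + 1 ≠ (cf hn f ht : ℕ)) :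
    Phi hn f i = Equiv.swap 0 (f (i0 hn)) (f i) := by
  rw [Phi_def hn f ht hp]
  simp only [if_neg h1, if_neg h2]

lemma Fg_vone (hn : 0 < n) (f : Fin n → Fin (n + 1)) (ht : IsTree f)
    (hp : f (i0 hn) ≠ 0) : F (Phi hn f) (vone hn) = f (i0 hn) := by
  rw [F_vone hn (Phi hn f)]
  exact g_i0 hn f ht hp

lemma Fg_cf (hn : 0 < n) (f : Fin n → Fin (n + 1)) (ht : IsTree f)
    (hp : f (i0 hn) ≠ 0) : F (Phi hn f) (cf hn f ht) = 0 := by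
  rw [F_apply_ne _ _ (cf_val_ne_zero hn f ht hp)]
  exact g_ic hn f ht hp

lemma Fg_gen (hn : 0 < n) (f : Fin n → Fin (n + 1)) (ht : IsTree f)
    (hp : f (i0 hn) ≠ 0) (v : Fin (n + 1)) (h0 : (v : ℕ) ≠ 0)
    (h1 : v ≠ vone hn) (h2 : v ≠ cf hn f ht) :
    F (Phi hn f) v = Equiv.swap 0 (f (i0 hn)) (F f v) := by
  rw [F_apply_ne _ _ h0, F_apply_ne f _ h0]
  apply g_other hn f ht hp
  · intro h
    have hv := congrArg Fin.val h
    simp only [i0] at hv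
    exact h1 (Fin.ext (by simp [vone]; omega))
  · intro h
    simp only at h
    exact h2 (Fin.ext (by omega))

lemma Fg_chain (hn : 0 < n) (f : Fin n → Fin (n + 1)) (ht : IsTree f)
    (hp : f (i0 hn) ≠ 0) (j : ℕ) (hj1 : 1 ≤ j) (hj2 : j ≤ Kf hn f ht - 2) :
    F (Phi hn f) ((F f)^[j] (vone hn)) = (F f)^[j + 1] (vone hn) := by
  have hK := two_le_Kf hn f ht hp
  have h0 : ((F f)^[j] (vone hn) : ℕ) ≠ 0 := by
    intro h
    exact Kf_min hn f ht (m := j) (by omega) (Fin.ext (by simpa using h))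
  have h1 : (F f)^[j] (vone hn) ≠ vone hn := by
    intro h
    exact chain_inj hn f ht (a := 0) (b := j) (by omega) (by omega)
      (by simpa using h.symm)
  have h2 : (F f)^[j] (vone hn) ≠ cf hn f ht := by
    exact chain_inj hn f ht (a := j) (b := Kf hn f ht - 1) (by omega) (by omega)
  rw [Fg_gen hn f ht hp _ h0 h1 h2]
  have hw0 : (F f)^[j + 1] (vone hn) ≠ 0 := Kf_min hn f ht (m := j + 1) (by omega)
  have hwp : (F f)^[j + 1] (vone hn) ≠ f (i0 hn) := by
    intro h
    refine chain_inj hn f ht (a := 1) (b := j + 1) (by omega) (by omega) ?_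
    rw [h, Function.iterate_one, F_vone hn f]
  rw [Function.iterate_succ_apply'] at hw0 hwp ⊢
  exact Equiv.swap_apply_of_ne_of_ne hw0 hwp

lemma chain_eq (hn : 0 < n) (f : Fin n → Fin (n + 1)) (ht : IsTree f)
    (hp : f (i0 hn) ≠ 0) (j : ℕ) (hj : j ≤ Kf hn f ht - 1) :
    (F (Phi hn f))^[j] (vone hn) = (F f)^[j] (vone hn) := by
  have hK := two_le_Kf hn f ht hp
  induction j with
  | zero => rfl
  | succ j ih =>
    rw [Function.iterate_succ_apply', ih (by omega), Function.iterate_succ_apply']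
    rcases Nat.eq_zero_or_pos j with h | h
    · subst h
      simp only [Function.iterate_zero_apply]
      rw [Fg_vone hn f ht hp, F_vone hn f]
    · rw [← Function.iterate_succ_apply' (F f) j (vone hn)]
      exact Fg_chain hn f ht hp j h (by omega)

lemma FgK (hn : 0 < n) (f : Fin n → Fin (n + 1)) (ht : IsTree f)
    (hp : f (i0 hn) ≠ 0) :
    (F (Phi hn f))^[Kf hn f ht] (vone hn) = 0 := by
  have hK := two_le_Kf hn f ht hp
  have : Kf hn f ht = (Kf hn f ht - 1) + 1 := by omega
  rw [this, Function.iterate_succ_apply', chain_eq hn f ht hp _ le_rfl]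
  exact Fg_cf hn f ht hp

lemma p_reaches (hn : 0 < n) (f : Fin n → Fin (n + 1)) (ht : IsTree f)
    (hp : f (i0 hn) ≠ 0) :
    (F (Phi hn f))^[Kf hn f ht - 1] (f (i0 hn)) = 0 := by
  have hK := two_le_Kf hn f ht hp
  have h1 : (F (Phi hn f))^[1] (vone hn) = f (i0 hn) := by
    simpa using Fg_vone hn f ht hp
  calc (F (Phi hn f))^[Kf hn f ht - 1] (f (i0 hn))
      = (F (Phi hn f))^[Kf hn f ht - 1] ((F (Phi hn f))^[1] (vone hn)) := by rw [h1]
    _ = (F (Phi hn f))^[Kf hn f ht - 1 + 1] (vone hn) := by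
        rw [← Function.iterate_add_apply]
    _ = 0 := by rw [Nat.sub_add_cancel (by omega)]; exact FgK hn f ht hp

lemma gtree (hn : 0 < n) (f : Fin n → Fin (n + 1)) (ht : IsTree f) :
    IsTree (Phi hn f) := by
  by_cases hp : f (i0 hn) = 0
  · rw [Phi_eq_self hn f hp]; exact ht
  intro v
  suffices H : ∀ d v, Nat.find (ht v) ≤ d → ∃ M, (F (Phi hn f))^[M] v = 0 by
    exact H _ v le_rfl
  intro d
  induction d with
  | zero =>
    intro v hv
    have h0 := Nat.le_zero.mp hv
    have hs := Nat.find_spec (ht v)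
    rw [h0] at hs
    exact ⟨0, hs⟩
  | succ d ihd =>
    intro v hv
    by_cases h0 : v = 0
    · exact ⟨0, by simpa using h0⟩
    have hv0 : (v : ℕ) ≠ 0 := fun h => h0 (Fin.ext (by simpa using h))
    by_cases h1 : v = vone hn
    · refine ⟨(Kf hn f ht - 1) + 1, ?_⟩
      rw [Function.iterate_succ_apply, h1, Fg_vone hn f ht hp]
      exact p_reaches hn f ht hp
    by_cases h2 : v = cf hn f ht
    · exact ⟨1, by simpa [h2] using Fg_cf hn f ht hp⟩
    have hFg := Fg_gen hn f ht hp v hv0 h1 h2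
    by_cases hw0 : F f v = 0
    · have hstep : F (Phi hn f) v = f (i0 hn) := by
        rw [hFg, hw0]
        exact Equiv.swap_apply_left _ _
      refine ⟨(Kf hn f ht - 1) + 1, ?_⟩
      rw [Function.iterate_succ_apply, hstep]
      exact p_reaches hn f ht hp
    by_cases hwp : F f v = f (i0 hn)
    · have hstep : F (Phi hn f) v = 0 := by
        rw [hFg, hwp]
        exact Equiv.swap_apply_right _ _
      exact ⟨1, by simpa using hstep⟩
    · have hfix : F (Phi hn f) v = F f v := by
        rw [hFg]
        exact Equiv.swap_apply_of_ne_of_ne hw0 hwp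
      have hD : 1 ≤ Nat.find (ht v) := by
        rcases Nat.eq_zero_or_pos (Nat.find (ht v)) with h | h
        · exfalso
          have hs := Nat.find_spec (ht v)
          rw [h] at hs
          exact h0 hs
        · exact h
      have hw : (F f)^[Nat.find (ht v) - 1] (F f v) = 0 := by
        have hs : (F f)^[(Nat.find (ht v) - 1) + 1] v = 0 := by
          rw [Nat.sub_add_cancel hD]
          exact Nat.find_spec (ht v)
        rwa [Function.iterate_succ_apply] at hs
      have hle : Nat.find (ht (F f v)) ≤ d :=
        le_trans (Nat.find_le hw) (by omega)
      obtain ⟨M, hM⟩ := ihd (F f v) hle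
      exact ⟨M + 1, by rw [Function.iterate_succ_apply, hfix]; exact hM⟩

lemma Kg_eq (hn : 0 < n) (f : Fin n → Fin (n + 1)) (ht : IsTree f)
    (hp : f (i0 hn) ≠ 0) (hg : IsTree (Phi hn f)) :
    Kf hn (Phi hn f) hg = Kf hn f ht := by
  have hK := two_le_Kf hn f ht hp
  rw [Kf, Nat.find_eq_iff]
  constructor
  · exact FgK hn f ht hp
  · intro m hm
    rw [chain_eq hn f ht hp m (by omega)]
    exact Kf_min hn f ht hm

lemma cg_eq (hn : 0 < n) (f : Fin n → Fin (n + 1)) (ht : IsTree f)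
    (hp : f (i0 hn) ≠ 0) (hg : IsTree (Phi hn f)) :
    cf hn (Phi hn f) hg = cf hn f ht := by
  have hK := two_le_Kf hn f ht hp
  rw [cf, Kg_eq hn f ht hp hg, chain_eq hn f ht hp _ (by omega)]
  rfl

lemma Phi_invol (hn : 0 < n) (f : Fin n → Fin (n + 1)) (ht : IsTree f) :
    Phi hn (Phi hn f) = f := by
  by_cases hp : f (i0 hn) = 0
  · rw [Phi_eq_self hn f hp, Phi_eq_self hn f hp]
  have hg : IsTree (Phi hn f) := gtree hn f ht
  have hgp : Phi hn f (i0 hn) ≠ 0 := by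
    rw [g_i0 hn f ht hp]; exact hp
  funext i
  rw [Phi_def hn (Phi hn f) hg hgp, cg_eq hn f ht hp hg]
  beta_reduce
  by_cases h1 : i = i0 hn
  · rw [if_pos h1, g_i0 hn f ht hp, h1]
  rw [if_neg h1]
  by_cases h2 : (i : ℕ) + 1 = (cf hn f ht : ℕ)
  · rw [if_pos h2]
    have hi : i = ic hn f ht hp := by
      apply Fin.ext
      simp only [ic]
      omega
    rw [hi, f_ic hn f ht hp]
  · rw [if_neg h2, g_i0 hn f ht hp, g_other hn f ht hp i h1 h2,
      Equiv.swap_apply_self]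

lemma count_root (hn : 0 < n) (f : Fin n → Fin (n + 1)) (ht : IsTree f) :
    (Finset.univ.filter fun i => Phi hn f i = 0).card
      = (Finset.univ.filter fun i => f i = f (i0 hn)).card := by
  classical
  by_cases hp : f (i0 hn) = 0
  · rw [Phi_eq_self hn f hp]
    congr 1
    ext i
    simp [hp]
  · set e := Equiv.swap (i0 hn) (ic hn f ht hp) with he
    have key : ∀ i, (Phi hn f i = 0) ↔ (f (e i) = f (i0 hn)) := by
      intro i
      by_cases h1 : i = i0 hn
      · subst h1
        rw [g_i0 hn f ht hp, he]
        simp only [Equiv.swap_apply_left]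
        rw [f_ic hn f ht hp]
        constructor
        · intro h; exact absurd h hp
        · intro h; exact absurd h.symm hp
      by_cases h2 : i = ic hn f ht hp
      · subst h2
        rw [g_ic hn f ht hp, he]
        simp only [Equiv.swap_apply_right]
      · have hei : e i = i := Equiv.swap_apply_of_ne_of_ne h1 h2
        have h2' : (i : ℕ) + 1 ≠ (cf hn f ht : ℕ) := by
          intro h
          apply h2
          apply Fin.ext
          simp only [ic]
          omega
        rw [g_other hn f ht hp i h1 h2', hei,
          Equiv.apply_eq_iff_eq_symm_apply]
        simp
    have hfe : (Finset.univ.filter fun i => Phi hn f i = 0)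
        = Finset.map e.toEmbedding (Finset.univ.filter fun i => f i = f (i0 hn)) := by
      ext j
      rw [Finset.mem_map_equiv]
      simp only [Finset.mem_filter, Finset.mem_univ, true_and]
      rw [key j, he, Equiv.symm_swap]
    rw [hfe, Finset.card_map]

lemma count_p (hn : 0 < n) (f : Fin n → Fin (n + 1)) (ht : IsTree f) :
    (Finset.univ.filter fun i => Phi hn f i = Phi hn f (i0 hn)).card
      = (Finset.univ.filter fun i => f i = 0).card := by
  classical
  by_cases hp : f (i0 hn) = 0
  · rw [Phi_eq_self hn f hp]
    congr 1
    ext i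
    simp [hp]
  · set e := Equiv.swap (i0 hn) (ic hn f ht hp) with he
    have key : ∀ i, (Phi hn f i = Phi hn f (i0 hn)) ↔ (f (e i) = 0) := by
      intro i
      rw [g_i0 hn f ht hp]
      by_cases h1 : i = i0 hn
      · subst h1
        rw [g_i0 hn f ht hp, he]
        simp only [Equiv.swap_apply_left]
        rw [f_ic hn f ht hp]
        simp
      by_cases h2 : i = ic hn f ht hp
      · subst h2
        rw [g_ic hn f ht hp, he]
        simp only [Equiv.swap_apply_right]
        constructor
        · intro h; exact absurd h.symm hp
        · intro h; exact absurd h hp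
      · have hei : e i = i := Equiv.swap_apply_of_ne_of_ne h1 h2
        have h2' : (i : ℕ) + 1 ≠ (cf hn f ht : ℕ) := by
          intro h
          apply h2
          apply Fin.ext
          simp only [ic]
          omega
        rw [g_other hn f ht hp i h1 h2', hei,
          Equiv.apply_eq_iff_eq_symm_apply]
        simp
    have hfe : (Finset.univ.filter fun i => Phi hn f i = Phi hn f (i0 hn))
        = Finset.map e.toEmbedding (Finset.univ.filter fun i => f i = 0) := by
      ext j
      rw [Finset.mem_map_equiv]
      simp only [Finset.mem_filter, Finset.mem_univ, true_and]
      rw [key j, he, Equiv.symm_swap]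
    rw [hfe, Finset.card_map]

theorem main (hn : 0 < n) (k : ℕ) :
    {f : Fin n → Fin (n + 1) | IsTree f ∧
        (Finset.univ.filter fun i => f i = 0).card = k}.ncard
      = {f : Fin n → Fin (n + 1) | IsTree f ∧
        (Finset.univ.filter fun i => f i = f (i0 hn)).card = k}.ncard := by
  set S0 := {f : Fin n → Fin (n + 1) | IsTree f ∧
      (Finset.univ.filter fun i => f i = 0).card = k} with hS0
  set SP := {f : Fin n → Fin (n + 1) | IsTree f ∧
      (Finset.univ.filter fun i => f i = f (i0 hn)).card = k} with hSP
  have hmap1 : ∀ f ∈ S0, Phi hn f ∈ SP := by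
    intro f hf
    exact ⟨gtree hn f hf.1, by rw [count_p hn f hf.1]; exact hf.2⟩
  have hmap2 : ∀ f ∈ SP, Phi hn f ∈ S0 := by
    intro f hf
    exact ⟨gtree hn f hf.1, by rw [count_root hn f hf.1]; exact hf.2⟩
  have himg : Phi hn '' S0 = SP := by
    apply Set.Subset.antisymm
    · rintro - ⟨f, hf, rfl⟩
      exact hmap1 f hf
    · intro f hf
      exact ⟨Phi hn f, hmap2 f hf, Phi_invol hn f hf.1⟩
  have hinj : Set.InjOn (Phi hn) S0 := by
    intro a ha b hb hab
    have : Phi hn (Phi hn a) = Phi hn (Phi hn b) := by rw [hab]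
    rwa [Phi_invol hn a ha.1, Phi_invol hn b hb.1] at this
  rw [← himg, Set.ncard_image_of_injOn hinj]

end DegPf

/-- On labeled rooted trees on `{0,1,…,n}` with root `0` (encoded by the parent
map `f : Fin n → Fin (n+1)`, where index `i : Fin n` stands for the vertex
labeled `i+1`, and acyclicity says iterating the parent map from any vertex
reaches the root `0`), the root degree `#{i : f i = 0}` is equidistributed
with the degree `#{i : f i = f 1}` of the parent of vertex `1`. -/
theorem deg0_degp_equidistributed (n : ℕ) (hn : 1 ≤ n) (k : ℕ) :
    {f : Fin n → Fin (n + 1) |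
        (∀ v : Fin (n + 1), ∃ K : ℕ,
          (fun w : Fin (n + 1) =>
            if h : (w : ℕ) = 0 then w
            else f ⟨(w : ℕ) - 1, by have := w.isLt; omega⟩)^[K] v = 0) ∧
        (Finset.univ.filter (fun i : Fin n => f i = 0)).card = k}.ncard =
    {f : Fin n → Fin (n + 1) |
        (∀ v : Fin (n + 1), ∃ K : ℕ,
          (fun w : Fin (n + 1) =>
            if h : (w : ℕ) = 0 then w
            else f ⟨(w : ℕ) - 1, by have := w.isLt; omega⟩)^[K] v = 0) ∧
        (Finset.univ.filter (fun i : Fin n => f i = f ⟨0, by omega⟩)).card = k}.ncard := by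
  exact DegPf.main hn k
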